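/- arXiv:1707.04151 — 2 statements merged into one kernel-verified Lean document; each statement's English description precedes it below -/
import Mathlib

section
/- Let H = (M, n, R) be a constant-rate multi-mode system, S ⊆ ℝⁿ an open set, and x, y ∈ ℝⁿ such that the closed line segment {λ·x + (1−λ)·y : λ ∈ [0,1]} is contained in S and y − x = Σ_{m ∈ M} t(m) · R(m) for some t : M → ℝ with t(m) ≥ 0 for all m ∈ M. Then there exists an S-safe finite schedule steering H from x to y. -/
/-- The terminal state of the run of a schedule (a list of timed actions) from a state. -/
def runEnd {M V : Type*} [AddCommGroup V] [Module ℝ V] (R : M → V) : V → List (M × ℝ) → V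
  | x, [] => x
  | x, (m, t) :: σ => runEnd R (x + t • R m) σ

/-- A schedule is `S`-safe from `x` if every point visited during its run
(including along each timed action) lies in `S`. -/
def SafeSched {M V : Type*} [AddCommGroup V] [Module ℝ V] (R : M → V) (S : Set V) :
    V → List (M × ℝ) → Prop
  | _, [] => True
  | x, (m, t) :: σ =>
      (∀ τ ∈ Set.Icc (0 : ℝ) t, x + τ • R m ∈ S) ∧ SafeSched R S (x + t • R m) σ

section aux
variable {M : Type*} {V : Type*} [NormedAddCommGroup V] [NormedSpace ℝ V]
  (R : M → V) (S : Set V)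

lemma runEnd_append (σ σ' : List (M × ℝ)) : ∀ x : V,
    runEnd R x (σ ++ σ') = runEnd R (runEnd R x σ) σ' := by
  induction σ with
  | nil => intro x; rfl
  | cons p σ ih => rcases p with ⟨m, s⟩; intro x; simp [runEnd, ih]

lemma safeSched_append (σ σ' : List (M × ℝ)) : ∀ x : V,
    SafeSched R S x σ → SafeSched R S (runEnd R x σ) σ' → SafeSched R S x (σ ++ σ') := by
  induction σ with
  | nil => intro x _ h; exact h
  | cons p σ ih =>
      rcases p with ⟨m, s⟩; intro x h h'
      exact ⟨h.1, ih _ h.2 h'⟩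

lemma runEnd_map (s : M → ℝ) (l : List M) : ∀ z : V,
    runEnd R z (l.map fun m => (m, s m)) = z + (l.map fun m => s m • R m).sum := by
  induction l with
  | nil => intro z; simp [runEnd]
  | cons m l ih => intro z; simp [runEnd, ih, add_assoc]

lemma safe_aux (s : M → ℝ) (hs : ∀ m, 0 ≤ s m) (z0 : V) (B : ℝ)
    (hB : ∀ w, ‖w - z0‖ ≤ B → w ∈ S) :
    ∀ (l : List M) (z : V), ‖z - z0‖ + (l.map fun m => s m * ‖R m‖).sum ≤ B →
      SafeSched R S z (l.map fun m => (m, s m)) := by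
  intro l
  induction l with
  | nil => intro z _; trivial
  | cons m l ih =>
      intro z hz
      have hrest : 0 ≤ (l.map fun m => s m * ‖R m‖).sum := by
        apply List.sum_nonneg
        intro a ha
        simp only [List.mem_map] at ha
        obtain ⟨m', _, rfl⟩ := ha
        exact mul_nonneg (hs m') (norm_nonneg _)
      simp only [List.map_cons, List.sum_cons] at hz
      constructor
      · intro τ hτ
        apply hB
        have : ‖z + τ • R m - z0‖ ≤ ‖z - z0‖ + τ * ‖R m‖ := by
          calc ‖z + τ • R m - z0‖ = ‖(z - z0) + τ • R m‖ := by rw [add_sub_right_comm]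
            _ ≤ ‖z - z0‖ + ‖τ • R m‖ := norm_add_le _ _
            _ = ‖z - z0‖ + τ * ‖R m‖ := by
                rw [norm_smul, Real.norm_eq_abs, abs_of_nonneg hτ.1]
        refine this.trans ?_
        have : τ * ‖R m‖ ≤ s m * ‖R m‖ :=
          mul_le_mul_of_nonneg_right hτ.2 (norm_nonneg _)
        linarith
      · apply ih
        have : ‖z + s m • R m - z0‖ ≤ ‖z - z0‖ + s m * ‖R m‖ := by
          calc ‖z + s m • R m - z0‖ = ‖(z - z0) + s m • R m‖ := by rw [add_sub_right_comm]
            _ ≤ ‖z - z0‖ + ‖s m • R m‖ := norm_add_le _ _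
            _ = ‖z - z0‖ + s m * ‖R m‖ := by
                rw [norm_smul, Real.norm_eq_abs, abs_of_nonneg (hs m)]
        linarith

end aux


/-- If `S` is open, the closed segment from `x` to `y` lies in `S`, and `y - x` is a
nonnegative combination of the rate vectors, then there is an `S`-safe finite schedule
steering the multi-mode system from `x` to `y`. -/
theorem stmt2 {M : Type*} [Fintype M] [Nonempty M] {n : ℕ} (hn : 0 < n)
    (R : M → (Fin n → ℝ)) (S : Set (Fin n → ℝ)) (hSopen : IsOpen S)
    (x y : Fin n → ℝ) (hseg : segment ℝ x y ⊆ S)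
    (t : M → ℝ) (ht : ∀ m, 0 ≤ t m) (hsum : y - x = ∑ m, t m • R m) :
    ∃ σ : List (M × ℝ), (∀ p ∈ σ, 0 ≤ p.2) ∧ SafeSched R S x σ ∧ runEnd R x σ = y := by
  -- thickening of segment inside S
  have hcomp : IsCompact (segment ℝ x y) := by
    rw [segment_eq_image']
    exact isCompact_Icc.image (by continuity)
  obtain ⟨δ, hδ, hthick⟩ := hcomp.exists_thickening_subset_open hSopen hseg
  set C : ℝ := ∑ m, t m * ‖R m‖ with hC
  have hC0 : 0 ≤ C := Finset.sum_nonneg fun m _ => mul_nonneg (ht m) (norm_nonneg _)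
  obtain ⟨N, hN⟩ := exists_nat_gt (C / (δ / 2))
  have hNpos : 0 < (N : ℝ) := lt_of_le_of_lt (div_nonneg hC0 (by linarith)) hN
  have hCN : C / N ≤ δ / 2 := by
    rw [div_le_iff₀ hNpos]
    have := (div_lt_iff₀ (by linarith : (0:ℝ) < δ/2)).mp hN
    nlinarith
  set s : M → ℝ := fun m => t m / N with hsdef
  have hs : ∀ m, 0 ≤ s m := fun m => div_nonneg (ht m) hNpos.le
  set L : List M := Finset.univ.toList with hL
  set cyc : List (M × ℝ) := L.map fun m => (m, s m) with hcyc
  -- one cycle moves by (1/N) • (y - x)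
  have hfun : ∀ m : M, s m • R m = (1 / (N:ℝ)) • (t m • R m) := by
    intro m
    rw [smul_smul]
    congr 1
    rw [hsdef]
    ring
  have hsumlist : (L.map fun m => s m • R m).sum = (1 / (N:ℝ)) • (y - x) := by
    rw [hsum, Finset.smul_sum, ← Finset.sum_map_toList]
    simp only [hfun, hL]
  have hfun2 : ∀ m : M, s m * ‖R m‖ = t m * ‖R m‖ / (N:ℝ) := by
    intro m
    rw [hsdef]
    ring
  have hcostlist : (L.map fun m => s m * ‖R m‖).sum = C / N := by
    rw [hC, Finset.sum_div, ← Finset.sum_map_toList]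
    simp only [hfun2, hL]
  -- safety of one cycle from a segment point
  have hball : ∀ z ∈ segment ℝ x y, ∀ w : Fin n → ℝ, ‖w - z‖ ≤ δ / 2 → w ∈ S := by
    intro z hz w hw
    apply hthick
    rw [Metric.mem_thickening_iff]
    exact ⟨z, hz, by rw [dist_eq_norm]; linarith⟩
  have hseg_mem : ∀ k : ℕ, k ≤ N → x + ((k : ℝ) / N) • (y - x) ∈ segment ℝ x y := by
    intro k hk
    rw [segment_eq_image']
    exact ⟨(k : ℝ)/N, ⟨div_nonneg (Nat.cast_nonneg _) hNpos.le,
      (div_le_one hNpos).mpr (Nat.cast_le.mpr hk)⟩, rfl⟩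
  -- iterate
  have key : ∀ k : ℕ, k ≤ N →
      SafeSched R S x (List.flatten (List.replicate k cyc)) ∧
      runEnd R x (List.flatten (List.replicate k cyc)) = x + ((k : ℝ) / N) • (y - x) := by
    intro k
    induction k with
    | zero => intro _; constructor; · trivial
              · simp [runEnd]
    | succ k ih =>
        intro hk
        obtain ⟨ihs, ihe⟩ := ih (Nat.le_of_succ_le hk)
        have hrep : List.replicate (k+1) cyc = List.replicate k cyc ++ [cyc] :=
          List.replicate_succ'
        rw [hrep, List.flatten_append]
        simp only [List.flatten, List.append_eq, List.append_nil]
        set z := x + ((k : ℝ) / N) • (y - x) with hz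
        have hzseg : z ∈ segment ℝ x y := hseg_mem k (Nat.le_of_succ_le hk)
        have hsafe_cyc : SafeSched R S z cyc := by
          apply safe_aux R S s hs z (δ/2) (hball z hzseg)
          rw [hcostlist]
          simpa using hCN
        have hend_cyc : runEnd R z cyc = x + (((k:ℝ)+1) / N) • (y - x) := by
          rw [hcyc, runEnd_map, hsumlist, hz, add_assoc, ← add_smul]
          congr 2
          field_simp
        constructor
        · apply safeSched_append
          · exact ihs
          · rw [ihe]; exact hsafe_cyc
        · rw [runEnd_append, ihe, hend_cyc]
          push_cast
          ring_nf
  obtain ⟨hsafe, hend⟩ := key N le_rfl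
  refine ⟨List.flatten (List.replicate N cyc), ?_, hsafe, ?_⟩
  · intro p hp
    simp only [List.mem_flatten, List.mem_replicate] at hp
    obtain ⟨l, ⟨_, rfl⟩, hpl⟩ := hp
    rw [hcyc] at hpl
    simp only [List.mem_map] at hpl
    obtain ⟨m, _, rfl⟩ := hpl
    exact hs m
  · rw [hend]
    rw [div_self hNpos.ne']
    simp
end

section
/- Let H = (M, n, R) be a constant-rate multi-mode system, S ⊆ ℝⁿ an open set admitting a finite cell cover C with |C| = B, and x_s, x_t ∈ S. Then there exists an S-safe finite schedule steering H from x_s to x_t if and only if there exist N ≤ B and points x_0, x_1, …, x_N ∈ ℝⁿ with x_0 = x_s and x_N = x_t such that for every 1 ≤ i ≤ N: (i) the closed line segment {λ·x_{i-1} + (1−λ)·x_i : λ ∈ [0,1]} is contained in S, and (ii) x_i − x_{i-1} = Σ_{m ∈ M} t_i^(m) · R(m) for some nonnegative reals t_i^(m). -/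
/-- A cell of `S` is an open, convex subset of `S`. -/
def IsCell {n : ℕ} (S c : Set (Fin n → ℝ)) : Prop :=
  IsOpen c ∧ Convex ℝ c ∧ c ⊆ S

section Aux

variable {M : Type*} [Fintype M] {n : ℕ} (R : M → (Fin n → ℝ)) (S : Set (Fin n → ℝ))

lemma runEnd_append_s8 (x : Fin n → ℝ) (l₁ l₂ : List (M × ℝ)) :
    runEnd R x (l₁ ++ l₂) = runEnd R (runEnd R x l₁) l₂ := by
  induction l₁ generalizing x with
  | nil => rfl
  | cons p l ih => obtain ⟨m, t⟩ := p; simpa [runEnd] using ih _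

lemma safeSched_append_s8 (x : Fin n → ℝ) (l₁ l₂ : List (M × ℝ)) :
    SafeSched R S x (l₁ ++ l₂) ↔ SafeSched R S x l₁ ∧ SafeSched R S (runEnd R x l₁) l₂ := by
  induction l₁ generalizing x with
  | nil => simp [SafeSched, runEnd]
  | cons p l ih => obtain ⟨m, t⟩ := p; simp [SafeSched, runEnd, ih, and_assoc]

lemma runEnd_eq_sum (x : Fin n → ℝ) (l : List (M × ℝ)) :
    runEnd R x l = x + (l.map fun p => p.2 • R p.1).sum := by
  induction l generalizing x with
  | nil => simp [runEnd]
  | cons p l ih => obtain ⟨m, t⟩ := p; simp [runEnd, ih, add_assoc]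

/-- Safety from a closed ball contained in `S`. -/
lemma safe_of_ball (x : Fin n → ℝ) (l : List (M × ℝ)) (r : ℝ)
    (hsum : (l.map fun p => ‖p.2 • R p.1‖).sum ≤ r)
    (hball : Metric.closedBall x r ⊆ S) : SafeSched R S x l := by
  induction l generalizing x r with
  | nil => trivial
  | cons p l ih =>
    obtain ⟨m, t⟩ := p
    simp only [List.map_cons, List.sum_cons] at hsum
    have hsum' : (l.map fun p => ‖p.2 • R p.1‖).sum ≤ r - ‖t • R m‖ := by
      have h0 : (0:ℝ) ≤ (l.map fun p => ‖p.2 • R p.1‖).sum :=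
        List.sum_nonneg (by intro a ha; simp only [List.mem_map] at ha
                            obtain ⟨q, _, rfl⟩ := ha; positivity)
      linarith
    refine ⟨?_, ih _ _ hsum' ?_⟩
    · intro τ hτ
      apply hball
      have h0 : (0:ℝ) ≤ (l.map fun p => ‖p.2 • R p.1‖).sum :=
        List.sum_nonneg (by intro a ha; simp only [List.mem_map] at ha
                            obtain ⟨q, _, rfl⟩ := ha; positivity)
      have : ‖τ • R m‖ ≤ ‖t • R m‖ := by
        rw [norm_smul, norm_smul]
        gcongr
        simp only [Real.norm_eq_abs]
        rw [abs_of_nonneg hτ.1]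
        exact hτ.2.trans (le_abs_self t)
      simp only [Metric.mem_closedBall, dist_eq_norm, add_sub_cancel_left]
      linarith
    · intro z hz
      apply hball
      simp only [Metric.mem_closedBall, dist_eq_norm] at hz ⊢
      calc ‖z - x‖ = ‖(z - (x + t • R m)) + t • R m‖ := by ring_nf
        _ ≤ ‖z - (x + t • R m)‖ + ‖t • R m‖ := norm_add_le _ _
        _ ≤ r := by linarith

end Aux

section Seg
variable {M : Type*} [Fintype M] {n : ℕ} (R : M → (Fin n → ℝ)) {S : Set (Fin n → ℝ)}

/-- Safe schedule realizing one segment move. -/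
lemma segment_schedule (hSopen : IsOpen S) (a b : Fin n → ℝ)
    (hseg : segment ℝ a b ⊆ S) (t : M → ℝ) (ht : ∀ m, 0 ≤ t m)
    (hd : b - a = ∑ m, t m • R m) :
    ∃ σ : List (M × ℝ), (∀ p ∈ σ, 0 ≤ p.2) ∧ SafeSched R S a σ ∧ runEnd R a σ = b := by
  -- compactness of the segment
  have hcomp : IsCompact (segment ℝ a b) := by
    rw [segment_eq_image']
    exact (isCompact_Icc.image (by continuity))
  obtain ⟨ε, hε, hthick⟩ := hcomp.exists_thickening_subset_open hSopen hseg
  set c₀ : ℝ := ∑ m, ‖t m • R m‖ with hc₀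
  have hc₀0 : 0 ≤ c₀ := Finset.sum_nonneg fun _ _ => norm_nonneg _
  obtain ⟨K, hK⟩ := exists_nat_gt (c₀ / ε)
  have hKpos : 0 < (K + 1 : ℝ) := by positivity
  have hsmall : c₀ / (K + 1 : ℝ) < ε := by
    rw [div_lt_iff₀ hKpos]
    have : c₀ / ε < K + 1 := hK.trans (by linarith)
    calc c₀ = (c₀ / ε) * ε := by field_simp
      _ < (K + 1) * ε := mul_lt_mul_of_pos_right this hε
      _ = ε * (K + 1) := by ring
  set d : Fin n → ℝ := b - a with hdd
  set round : List (M × ℝ) := (Finset.univ.toList.map fun m => (m, t m / (K + 1 : ℝ))) with hround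
  have hroundt : ∀ p ∈ round, 0 ≤ p.2 := by
    intro p hp
    simp only [hround, List.mem_map] at hp
    obtain ⟨m, _, rfl⟩ := hp
    exact div_nonneg (ht m) hKpos.le
  have hroundsum : (round.map fun p => ‖p.2 • R p.1‖).sum = c₀ / (K + 1 : ℝ) := by
    rw [hround, List.map_map]
    have : ((fun p : M × ℝ => ‖p.2 • R p.1‖) ∘ fun m => (m, t m / (K + 1 : ℝ)))
        = fun m => ‖t m • R m‖ / (K + 1 : ℝ) := by
      funext m
      simp only [Function.comp_apply, norm_smul, Real.norm_eq_abs,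
        abs_div, abs_of_nonneg (ht m), abs_of_nonneg hKpos.le]
      ring
    rw [this, Finset.sum_map_toList, Finset.sum_div]
  have hrounddisp : (round.map fun p => p.2 • R p.1).sum = ((K + 1 : ℝ))⁻¹ • d := by
    rw [hround, List.map_map]
    have : ((fun p : M × ℝ => p.2 • R p.1) ∘ fun m => (m, t m / (K + 1 : ℝ)))
        = fun m => ((K + 1 : ℝ))⁻¹ • (t m • R m) := by
      funext m
      rw [Function.comp_apply, smul_smul, div_eq_inv_mul]
    rw [this, Finset.sum_map_toList, ← Finset.smul_sum, ← hd, hdd]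
  have key : ∀ k : ℕ, k ≤ K + 1 → ∃ σ : List (M × ℝ), (∀ p ∈ σ, 0 ≤ p.2) ∧
      SafeSched R S a σ ∧ runEnd R a σ = a + ((k : ℝ) / (K + 1 : ℝ)) • d := by
    intro k hk
    induction k with
    | zero => exact ⟨[], by simp, trivial, by simp [runEnd]⟩
    | succ k ih =>
      obtain ⟨σ, hσt, hσs, hσe⟩ := ih (Nat.le_of_succ_le hk)
      refine ⟨σ ++ round, ?_, ?_, ?_⟩
      · intro p hp
        rcases List.mem_append.1 hp with h | h
        · exact hσt p h
        · exact hroundt p h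
      · rw [safeSched_append_s8]
        refine ⟨hσs, ?_⟩
        rw [hσe]
        apply safe_of_ball R S _ _ (c₀ / (K + 1 : ℝ)) hroundsum.le
        intro z hz
        apply hthick
        rw [Metric.mem_thickening_iff]
        refine ⟨a + ((k : ℝ) / (K + 1 : ℝ)) • d, ?_, ?_⟩
        · rw [segment_eq_image']
          exact ⟨(k : ℝ) / (K + 1 : ℝ),
            ⟨div_nonneg (Nat.cast_nonneg k) hKpos.le,
             (div_le_one hKpos).2 (by exact_mod_cast Nat.le_of_succ_le hk)⟩, rfl⟩
        · rw [Metric.mem_closedBall] at hz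
          exact lt_of_le_of_lt hz hsmall
      · rw [runEnd_append_s8, hσe, runEnd_eq_sum, hrounddisp]
        rw [add_assoc, ← add_smul]
        congr 2
        push_cast
        field_simp
  obtain ⟨σ, h1, h2, h3⟩ := key (K + 1) le_rfl
  refine ⟨σ, h1, h2, ?_⟩
  rw [h3, hdd]
  have : ((K + 1 : ℕ) : ℝ) / (K + 1 : ℝ) = 1 := by
    push_cast; field_simp
  rw [this, one_smul]
  abel

/-- Backward direction: from points to a safe schedule. -/
lemma points_to_schedule (hSopen : IsOpen S) :
    ∀ (N : ℕ) (x : ℕ → (Fin n → ℝ)),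
    (∀ i, 1 ≤ i → i ≤ N →
        segment ℝ (x (i - 1)) (x i) ⊆ S ∧
        ∃ t : M → ℝ, (∀ m, 0 ≤ t m) ∧ x i - x (i - 1) = ∑ m, t m • R m) →
    ∃ σ : List (M × ℝ), (∀ p ∈ σ, 0 ≤ p.2) ∧ SafeSched R S (x 0) σ ∧
      runEnd R (x 0) σ = x N := by
  intro N
  induction N with
  | zero => exact fun x _ => ⟨[], by simp, trivial, rfl⟩
  | succ N ih =>
    intro x hx
    obtain ⟨σ₁, h1t, h1s, h1e⟩ := ih x fun i h1 h2 => hx i h1 (h2.trans (Nat.le_succ N))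
    obtain ⟨hseg, t, ht, hd⟩ := hx (N + 1) (Nat.succ_le_succ (Nat.zero_le N)) le_rfl
    simp only [Nat.add_sub_cancel] at hseg hd
    obtain ⟨σ₂, h2t, h2s, h2e⟩ := segment_schedule R hSopen (x N) (x (N + 1)) hseg t ht hd
    refine ⟨σ₁ ++ σ₂, ?_, ?_, ?_⟩
    · intro p hp
      rcases List.mem_append.1 hp with h | h
      · exact h1t p h
      · exact h2t p h
    · rw [safeSched_append_s8]
      exact ⟨h1s, by rw [h1e]; exact h2s⟩
    · rw [runEnd_append_s8, h1e, h2e]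

end Seg

section Fwd
variable {M : Type*} [Fintype M] {n : ℕ}

/-- difference is a nonnegative combination of rates -/
def QQ (R : M → (Fin n → ℝ)) (u v : Fin n → ℝ) : Prop :=
  ∃ t : M → ℝ, (∀ m, 0 ≤ t m) ∧ v - u = ∑ m, t m • R m

/-- valid edge: segment in `S` and nonneg-combination displacement -/
def PP (R : M → (Fin n → ℝ)) (S : Set (Fin n → ℝ)) (u v : Fin n → ℝ) : Prop :=
  segment ℝ u v ⊆ S ∧ QQ R u v

variable {R : M → (Fin n → ℝ)} {S : Set (Fin n → ℝ)}

lemma qq_refl (u : Fin n → ℝ) : QQ R u u :=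
  ⟨0, fun _ => le_rfl, by simp⟩

lemma qq_trans {u v w : Fin n → ℝ} (h1 : QQ R u v) (h2 : QQ R v w) : QQ R u w := by
  obtain ⟨t1, ht1, he1⟩ := h1
  obtain ⟨t2, ht2, he2⟩ := h2
  refine ⟨t1 + t2, fun m => add_nonneg (ht1 m) (ht2 m), ?_⟩
  have : w - u = (v - u) + (w - v) := by abel
  rw [this, he1, he2, ← Finset.sum_add_distrib]
  exact Finset.sum_congr rfl fun m _ => (add_smul _ _ _).symm

lemma qq_of_smul {u v u' v' : Fin n → ℝ} {s : ℝ} (h : QQ R u v) (hs : 0 ≤ s)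
    (he : v' - u' = s • (v - u)) : QQ R u' v' := by
  obtain ⟨t, ht, hd⟩ := h
  refine ⟨fun m => s * t m, fun m => mul_nonneg hs (ht m), ?_⟩
  rw [he, hd, Finset.smul_sum]
  exact Finset.sum_congr rfl fun m _ => (smul_smul _ _ _)

/-- the set of points on the polyline with initial point `p` and further vertices `l` -/
def pathSet : (Fin n → ℝ) → List (Fin n → ℝ) → Set (Fin n → ℝ)
  | p, [] => {p}
  | p, v :: l => segment ℝ p v ∪ pathSet v l

lemma mem_pathSet_self (p : Fin n → ℝ) (l : List (Fin n → ℝ)) : p ∈ pathSet p l := by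
  cases l with
  | nil => rfl
  | cons v l => exact Or.inl (left_mem_segment ℝ p v)

lemma getLast_mem_pathSet (p : Fin n → ℝ) (l : List (Fin n → ℝ)) :
    (p :: l).getLast (List.cons_ne_nil _ _) ∈ pathSet p l := by
  induction l generalizing p with
  | nil => rfl
  | cons v l ih =>
    rw [List.getLast_cons (List.cons_ne_nil _ _)]
    exact Or.inr (ih v)

/-- Split lemma: find the last point of the polyline in `closure c`. -/
lemma split_lemma (c : Set (Fin n → ℝ)) :
    ∀ (l : List (Fin n → ℝ)) (p : Fin n → ℝ), List.Chain' (PP R S) (p :: l) → p ∈ S →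
    (pathSet p l ∩ closure c).Nonempty →
    ∃ (q : Fin n → ℝ) (l₂ : List (Fin n → ℝ)),
      q ∈ closure c ∧ q ∈ S ∧ QQ R p q ∧ List.Chain' (PP R S) (q :: l₂) ∧
      (q :: l₂).getLast (List.cons_ne_nil _ _) = (p :: l).getLast (List.cons_ne_nil _ _) ∧
      pathSet q l₂ ⊆ pathSet p l ∧
      (∀ z ∈ pathSet q l₂, z ∈ closure c → z = q) := by
  intro l
  induction l with
  | nil =>
    intro p hchain hpS hne
    obtain ⟨z, hz1, hz2⟩ := hne
    have hz : z = p := hz1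
    refine ⟨p, [], hz ▸ hz2, hpS, qq_refl p, List.isChain_singleton p, rfl, le_rfl, ?_⟩
    intro z hz' _; exact hz'
  | cons v l' ih =>
    intro p hchain hpS hne
    have hPpv : PP R S p v := (List.isChain_cons_cons.1 hchain).1
    have hchain' : List.Chain' (PP R S) (v :: l') := (List.isChain_cons_cons.1 hchain).2
    have hvS : v ∈ S := hPpv.1 (right_mem_segment ℝ p v)
    by_cases h1 : (pathSet v l' ∩ closure c).Nonempty
    · obtain ⟨q, l₂, hq1, hq2, hq3, hq4, hq5, hq6, hq7⟩ := ih v hchain' hvS h1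
      refine ⟨q, l₂, hq1, hq2, qq_trans hPpv.2 hq3, hq4, ?_, ?_, hq7⟩
      · rw [hq5, List.getLast_cons (List.cons_ne_nil _ _)]
      · exact hq6.trans Set.subset_union_right
    · -- last closure-c point lies on segment p v
      rw [Set.not_nonempty_iff_eq_empty] at h1
      have hmeet : ∃ u ∈ Set.Icc (0:ℝ) 1, p + u • (v - p) ∈ closure c := by
        obtain ⟨z, hz1, hz2⟩ := hne
        rcases hz1 with hz1 | hz1
        · rw [segment_eq_image'] at hz1
          obtain ⟨u, hu, rfl⟩ := hz1
          exact ⟨u, hu, hz2⟩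
        · exact absurd (Set.mem_inter hz1 hz2) (by rw [h1]; exact Set.notMem_empty z)
      set T : Set ℝ := {u ∈ Set.Icc (0:ℝ) 1 | p + u • (v - p) ∈ closure c} with hT
      have hTne : T.Nonempty := hmeet
      have hTclosed : IsClosed T := by
        have hcont : Continuous fun u : ℝ => p + u • (v - p) :=
          continuous_const.add (continuous_id.smul continuous_const)
        exact (isClosed_Icc.inter (isClosed_closure.preimage hcont))
      have hTbdd : BddAbove T := BddAbove.mono (fun u hu => hu.1) bddAbove_Icc
      set s := sSup T with hs
      have hsT : s ∈ T := hTclosed.csSup_mem hTne hTbdd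
      obtain ⟨hsIcc, hsc⟩ := hsT
      set q : Fin n → ℝ := p + s • (v - p) with hq
      have hqseg : q ∈ segment ℝ p v := by
        rw [segment_eq_image']; exact ⟨s, hsIcc, rfl⟩
      have hvq : v - q = (1 - s) • (v - p) := by
        rw [hq]; module
      refine ⟨q, v :: l', hsc, hPpv.1 hqseg, ?_, ?_, ?_, ?_, ?_⟩
      · exact qq_of_smul hPpv.2 hsIcc.1 (by rw [hq]; abel)
      · apply List.isChain_cons_cons.2
        refine ⟨⟨?_, ?_⟩, hchain'⟩
        · exact (convex_segment (𝕜 := ℝ) p v).segment_subset hqseg (right_mem_segment ℝ p v)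
              |>.trans hPpv.1
        · exact qq_of_smul hPpv.2 (by linarith [hsIcc.2]) hvq
      · rw [List.getLast_cons (List.cons_ne_nil _ _), List.getLast_cons (List.cons_ne_nil _ _)]
      · show segment ℝ q v ∪ pathSet v l' ⊆ segment ℝ p v ∪ pathSet v l'
        apply Set.union_subset_union_left
        exact (convex_segment (𝕜 := ℝ) p v).segment_subset hqseg (right_mem_segment ℝ p v)
      · intro z hz hzc
        rcases hz with hz | hz
        · rw [segment_eq_image'] at hz
          obtain ⟨w, hw, rfl⟩ := hz
          have hrepr : q + w • (v - q) = p + (s + w * (1 - s)) • (v - p) := by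
            rw [hq, hvq]; module
          have hu1 : s + w * (1 - s) ∈ T := by
            constructor
            · constructor
              · have : 0 ≤ w * (1 - s) := mul_nonneg hw.1 (by linarith [hsIcc.2])
                linarith [hsIcc.1]
              · nlinarith [hw.1, hw.2, hsIcc.1, hsIcc.2]
            · rw [← hrepr]; exact hzc
          have hle : s + w * (1 - s) ≤ s := le_csSup hTbdd hu1
          have hge : 0 ≤ w * (1 - s) := mul_nonneg hw.1 (by linarith [hsIcc.2])
          have : s + w * (1 - s) = s := le_antisymm hle (by linarith)
          show q + w • (v - q) = q
          rw [hrepr, this]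
        · exact absurd (Set.mem_inter hz hzc) (by rw [h1]; exact Set.notMem_empty z)

/-- If the head is in the open set `c` and every closure-point equals the head,
the whole polyline is trivial. -/
lemma path_stuck (c : Set (Fin n → ℝ)) (hcopen : IsOpen c) :
    ∀ (l : List (Fin n → ℝ)) (q : Fin n → ℝ), q ∈ c →
    (∀ z ∈ pathSet q l, z ∈ closure c → z = q) → pathSet q l ⊆ {q} := by
  intro l
  induction l with
  | nil => intro q _ _; exact le_rfl
  | cons w r ih =>
    intro q hqc hlast
    have hwq : w = q := by
      have hcont : Continuous fun u : ℝ => q + u • (w - q) :=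
        continuous_const.add (continuous_id.smul continuous_const)
      have h0 : (fun u : ℝ => q + u • (w - q)) 0 ∈ c := by simpa using hqc
      have hnhds : (fun u : ℝ => q + u • (w - q)) ⁻¹' c ∈ nhds (0:ℝ) :=
        hcont.continuousAt.preimage_mem_nhds (hcopen.mem_nhds h0)
      obtain ⟨ε, hε, hball⟩ := Metric.mem_nhds_iff.1 hnhds
      set u := min (ε / 2) 1 with hu
      have hu0 : 0 < u := lt_min (by linarith) one_pos
      have hu1 : u ≤ 1 := min_le_right _ _
      have humem : u ∈ Metric.ball (0:ℝ) ε := by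
        rw [Metric.mem_ball, Real.dist_eq, sub_zero, abs_of_pos hu0]
        calc u ≤ ε / 2 := min_le_left _ _
          _ < ε := by linarith
      have hzc : q + u • (w - q) ∈ c := hball humem
      have hzpath : q + u • (w - q) ∈ pathSet q (w :: r) := by
        left
        rw [segment_eq_image']
        exact ⟨u, ⟨hu0.le, hu1⟩, rfl⟩
      have := hlast _ hzpath (subset_closure hzc)
      have h0' : u • (w - q) = 0 := by
        have := congrArg (fun z => z - q) this
        simpa [add_sub_cancel_left] using this
      have : w - q = 0 := by
        rcases smul_eq_zero.1 h0' with h | h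
        · exact absurd h hu0.ne'
        · exact h
      have := congrArg (fun z => z + q) this
      simpa using this
    show segment ℝ q w ∪ pathSet w r ⊆ {q}
    rw [hwq, segment_same]
    apply Set.union_subset le_rfl
    apply ih q hqc
    intro z hz hzc
    exact hlast z (Or.inr (hwq ▸ hz)) hzc

end Fwd

section Fwd2
variable {M : Type*} [Fintype M] {n : ℕ} {R : M → (Fin n → ℝ)} {S : Set (Fin n → ℝ)}

/-- Extract the polyline of a safe schedule. -/
lemma extract_polyline :
    ∀ (σ : List (M × ℝ)) (x : Fin n → ℝ), (∀ p ∈ σ, 0 ≤ p.2) → SafeSched R S x σ →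
    ∃ l : List (Fin n → ℝ), List.Chain' (PP R S) (x :: l) ∧
      (x :: l).getLast (List.cons_ne_nil _ _) = runEnd R x σ := by
  intro σ
  induction σ with
  | nil => intro x _ _; exact ⟨[], List.isChain_singleton x, rfl⟩
  | cons p σ' ih =>
    obtain ⟨m, t⟩ := p
    intro x hnn hsafe
    classical
    obtain ⟨hτ, hrest⟩ := hsafe
    have ht : 0 ≤ t := hnn (m, t) List.mem_cons_self
    obtain ⟨l', hl1, hl2⟩ := ih (x + t • R m) (fun p hp => hnn p (List.mem_cons_of_mem _ hp)) hrest
    refine ⟨(x + t • R m) :: l', ?_, ?_⟩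
    · apply List.isChain_cons_cons.2
      refine ⟨⟨?_, ?_⟩, hl1⟩
      · intro z hz
        rw [segment_eq_image'] at hz
        obtain ⟨θ, hθ, rfl⟩ := hz
        show x + θ • (x + t • R m - x) ∈ S
        have : x + θ • (x + t • R m - x) = x + (θ * t) • R m := by module
        rw [this]
        exact hτ (θ * t) ⟨mul_nonneg hθ.1 ht, by nlinarith [hθ.1, hθ.2]⟩
      · refine ⟨fun m' => if m' = m then t else 0, fun m' => by dsimp only; split <;> simp [ht], ?_⟩
        have : ∑ m', (if m' = m then t else 0) • R m'
            = ∑ m', (if m' = m then t • R m' else 0) := by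
          exact Finset.sum_congr rfl fun m' _ => by split <;> simp
        rw [this, Finset.sum_ite_eq' Finset.univ m (fun m' => t • R m'),
          if_pos (Finset.mem_univ m)]
        abel
    · rw [List.getLast_cons (List.cons_ne_nil _ _)]
      exact hl2

lemma segment_subset_of_cell {c : Set (Fin n → ℝ)} (hc : IsCell S c) {p q : Fin n → ℝ}
    (hp : p ∈ c) (hq : q ∈ closure c) (hqS : q ∈ S) : segment ℝ p q ⊆ S := by
  intro z hz
  rw [← insert_endpoints_openSegment] at hz
  rcases hz with rfl | hz
  · exact hc.2.2 hp
  rcases hz with rfl | hz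
  · exact hqS
  · have := hc.2.1.openSegment_interior_closure_subset_interior
      (by rwa [hc.1.interior_eq]) hq hz
    exact hc.2.2 (interior_subset this)

/-- Main compression: bound the number of polyline vertices by the number of cells. -/
lemma compress (C : Finset (Set (Fin n → ℝ))) (hcell : ∀ c ∈ C, IsCell S c)
    (hcover : (⋃ c ∈ C, c) = S) :
    ∀ (k : ℕ) (C' : Finset (Set (Fin n → ℝ))), C' ⊆ C → C'.card ≤ k →
    ∀ (p : Fin n → ℝ) (l : List (Fin n → ℝ)), List.Chain' (PP R S) (p :: l) → p ∈ S →
    (∀ y ∈ pathSet p l, ∀ c ∈ C, c ∉ C' → y ∉ c) →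
    ∃ zs : List (Fin n → ℝ), List.Chain' (PP R S) (p :: zs) ∧
      (p :: zs).getLast (List.cons_ne_nil _ _) = (p :: l).getLast (List.cons_ne_nil _ _) ∧
      zs.length ≤ C'.card := by
  classical
  intro k
  induction k with
  | zero =>
    intro C' hsub hcard p l _ hpS hinv
    exfalso
    have : p ∈ ⋃ c ∈ C, c := hcover ▸ hpS
    simp only [Set.mem_iUnion] at this
    obtain ⟨c, hcC, hpc⟩ := this
    have hC' : C' = ∅ := Finset.card_eq_zero.1 (Nat.le_zero.1 hcard)
    exact hinv p (mem_pathSet_self p l) c hcC (by simp [hC']) hpc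
  | succ k ihk =>
    intro C' hsub hcard p l hchain hpS hinv
    have : p ∈ ⋃ c ∈ C, c := hcover ▸ hpS
    simp only [Set.mem_iUnion] at this
    obtain ⟨c, hcC, hpc⟩ := this
    have hcC' : c ∈ C' := by
      by_contra h
      exact hinv p (mem_pathSet_self p l) c hcC h hpc
    obtain ⟨q, l₂, hq1, hq2, hq3, hq4, hq5, hq6, hq7⟩ :=
      split_lemma c l p hchain hpS ⟨p, mem_pathSet_self p l, subset_closure hpc⟩
    have hPpq : PP R S p q := ⟨segment_subset_of_cell (hcell c hcC) hpc hq1 hq2, hq3⟩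
    by_cases hqc : q ∈ c
    · -- path after q is trivial
      have hstuck : pathSet q l₂ ⊆ {q} := path_stuck c (hcell c hcC).1 l₂ q hqc hq7
      refine ⟨[q], ?_, ?_, ?_⟩
      · exact List.isChain_cons_cons.2 ⟨hPpq, List.isChain_singleton q⟩
      · have : (q :: l₂).getLast (List.cons_ne_nil _ _) ∈ pathSet q l₂ :=
          getLast_mem_pathSet q l₂
        have hlast : (q :: l₂).getLast (List.cons_ne_nil _ _) = q := hstuck this
        simp only [List.getLast_cons (List.cons_ne_nil _ _)] at hq5 ⊢
        rw [← hq5, hlast]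
        rfl
      · simpa using Finset.card_pos.2 ⟨c, hcC'⟩
    · -- recurse on C' \ {c}
      have hsub' : C'.erase c ⊆ C := (Finset.erase_subset _ _).trans hsub
      have hcard' : (C'.erase c).card ≤ k := by
        rw [Finset.card_erase_of_mem hcC']
        omega
      have hinv' : ∀ y ∈ pathSet q l₂, ∀ c' ∈ C, c' ∉ C'.erase c → y ∉ c' := by
        intro y hy c' hc'C hc'e hyc'
        by_cases hcc : c' = c
        · subst hcc
          exact hqc (hq7 y hy (subset_closure hyc') ▸ hyc')
        · exact hinv y (hq6 hy) c' hc'C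
            (fun h => hc'e (Finset.mem_erase.2 ⟨hcc, h⟩)) hyc'
      obtain ⟨zs', hz1, hz2, hz3⟩ := ihk (C'.erase c) hsub' hcard' q l₂ hq4 hq2 hinv'
      refine ⟨q :: zs', ?_, ?_, ?_⟩
      · exact List.isChain_cons_cons.2 ⟨hPpq, hz1⟩
      · simp only [List.getLast_cons (List.cons_ne_nil _ _)] at hz2 hq5 ⊢
        rw [hz2, hq5]
      · have h1 : 1 ≤ C'.card := Finset.card_pos.2 ⟨c, hcC'⟩
        have := Finset.card_erase_of_mem hcC'
        simp only [List.length_cons]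
        omega

end Fwd2

/-- Correctness of the bounded motion-planning procedure: for an open safety set `S`
admitting a finite cell cover `C` with `|C| = B` and `x_s, x_t ∈ S`, an `S`-safe
schedule from `x_s` to `x_t` exists iff there are `N ≤ B` intermediate points whose
consecutive closed segments lie in `S` and whose consecutive differences are
nonnegative combinations of the rate vectors. -/
theorem stmt8 {M : Type*} [Fintype M] [Nonempty M] {n : ℕ} (hn : 0 < n)
    (R : M → (Fin n → ℝ)) (S : Set (Fin n → ℝ)) (hSopen : IsOpen S)
    (C : Finset (Set (Fin n → ℝ))) (hcell : ∀ c ∈ C, IsCell S c)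
    (hcover : (⋃ c ∈ C, c) = S)
    (B : ℕ) (hB : B = C.card)
    (xs xt : Fin n → ℝ) (hxs : xs ∈ S) (hxt : xt ∈ S) :
    (∃ σ : List (M × ℝ), (∀ p ∈ σ, 0 ≤ p.2) ∧ SafeSched R S xs σ ∧ runEnd R xs σ = xt) ↔
      (∃ N ≤ B, ∃ x : ℕ → (Fin n → ℝ), x 0 = xs ∧ x N = xt ∧
        ∀ i, 1 ≤ i → i ≤ N →
          segment ℝ (x (i - 1)) (x i) ⊆ S ∧
          ∃ t : M → ℝ, (∀ m, 0 ≤ t m) ∧ x i - x (i - 1) = ∑ m, t m • R m) := by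
  constructor
  · rintro ⟨σ, hσt, hσs, hσe⟩
    obtain ⟨l, hl1, hl2⟩ := extract_polyline σ xs hσt hσs
    rw [hσe] at hl2
    obtain ⟨zs, hz1, hz2, hz3⟩ := compress C hcell hcover C.card C subset_rfl le_rfl xs l hl1 hxs
      (fun y _ c hc hcn => absurd hc hcn)
    rw [hl2] at hz2
    refine ⟨zs.length, hB ▸ hz3, fun i => (xs :: zs).getD i xt, rfl, ?_, ?_⟩
    · have hlen : zs.length < (xs :: zs).length := by simp
      show (xs :: zs).getD zs.length xt = xt
      rw [List.getD_eq_getElem _ _ hlen, ← hz2, List.getLast_eq_getElem]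
      simp
    · intro i h1 hN
      have hi : i < (xs :: zs).length := by simp; omega
      have hi1 : i - 1 < (xs :: zs).length := by simp; omega
      show segment ℝ ((xs :: zs).getD (i-1) xt) ((xs :: zs).getD i xt) ⊆ S ∧
        ∃ t : M → ℝ, (∀ m, 0 ≤ t m) ∧
          (xs :: zs).getD i xt - (xs :: zs).getD (i-1) xt = ∑ m, t m • R m
      rw [List.getD_eq_getElem _ _ hi, List.getD_eq_getElem _ _ hi1]
      have := List.isChain_iff_getElem.1 hz1 (i - 1) (by simp; omega)
      have heq : i - 1 + 1 = i := by omega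
      simp only [List.get_eq_getElem, heq] at this
      exact ⟨this.1, this.2⟩
  · rintro ⟨N, hN, x, hx0, hxN, hx⟩
    obtain ⟨σ, h1, h2, h3⟩ := points_to_schedule R hSopen N x hx
    rw [hx0] at h2 h3
    rw [hxN] at h3
    exact ⟨σ, h1, h2, h3⟩
end
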